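/- Let t ≥ 2 be an integer, let G be a finite connected simple graph with at least one edge, and let 𝒬 be a clique partition of G in which every clique has at most t vertices. Then |𝒬| ≥ ρ(G) − t + 1 + min_{u∈V(G)} d_u^𝒬. -/

import Mathlib

open Finset SimpleGraph Polynomial

variable {V : Type*}

/-- A clique partition of `G`: a set of cliques of `G` such that every edge of `G`
lies in exactly one of them. -/
def IsCliquePartition [DecidableEq V] (G : SimpleGraph V) (P : Finset (Finset V)) : Prop :=
  (∀ s ∈ P, G.IsClique (s : Set V)) ∧
    ∀ u v : V, G.Adj u v → ∃! s, s ∈ P ∧ u ∈ s ∧ v ∈ s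

/-- The spectral radius of a finite graph: the largest eigenvalue of its adjacency matrix. -/
noncomputable def specRad [Fintype V] [DecidableEq V] (G : SimpleGraph V)
    [DecidableRel G.Adj] : ℝ :=
  sSup {μ : ℝ | Module.End.HasEigenvalue (Matrix.toLin' (G.adjMatrix ℝ)) μ}

/-- `cpT G t` : the minimum number of cliques in a clique partition of `G` in which
every clique has at most `t` vertices. -/
noncomputable def cpT [DecidableEq V] (G : SimpleGraph V) (t : ℕ) : ℕ :=
  sInf {m | ∃ P : Finset (Finset V),
    IsCliquePartition G P ∧ (∀ s ∈ P, s.card ≤ t) ∧ P.card = m}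

/-- `cp G` : the clique partition number of `G`. -/
noncomputable def cp [DecidableEq V] (G : SimpleGraph V) : ℕ :=
  sInf {m | ∃ P : Finset (Finset V), IsCliquePartition G P ∧ P.card = m}

/-- For any clique partition `𝒬` of a connected graph `G` in which
every clique has at most `t` vertices, `|𝒬| ≥ ρ(G) − t + 1 + min_{u} d_u^𝒬`. -/
theorem card_cliquePartition_ge [Fintype V] [DecidableEq V] (G : SimpleGraph V)
    [DecidableRel G.Adj] (t : ℕ) (ht : 2 ≤ t) (hconn : G.Connected)
    (hedge : G.edgeSet.Nonempty)
    (P : Finset (Finset V)) (hP : IsCliquePartition G P) (hsize : ∀ s ∈ P, s.card ≤ t) :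
    specRad G - t + 1 +
      ((Finset.univ.inf' (Finset.univ_nonempty_iff.mpr hconn.nonempty)
        (fun u => (P.filter (fun s => u ∈ s)).card) : ℕ) : ℝ) ≤ (P.card : ℝ) := by
  classical
  set d : V → ℕ := fun u => (P.filter (fun s => u ∈ s)).card with hddef
  set δ : ℕ := Finset.univ.inf' (Finset.univ_nonempty_iff.mpr hconn.nonempty) d with hδdef
  have hδle : ∀ v : V, δ ≤ d v := fun v => Finset.inf'_le _ (Finset.mem_univ v)
  obtain ⟨v₀⟩ := hconn.nonempty
  have hδn : δ ≤ P.card := le_trans (hδle v₀) (Finset.card_filter_le _ _)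
  have hint : ∀ s ∈ P, ∀ s' ∈ P, s ≠ s' → (s ∩ s').card ≤ 1 := by
    intro s hs s' hs' hne
    by_contra h
    push_neg at h
    obtain ⟨u, hu, v, hv, huv⟩ := Finset.one_lt_card.mp h
    simp only [Finset.mem_inter] at hu hv
    have hadj : G.Adj u v :=
      (hP.1 s hs) (Finset.mem_coe.mpr hu.1) (Finset.mem_coe.mpr hv.1) huv
    obtain ⟨s₀, hs₀, huniq⟩ := hP.2 u v hadj
    exact hne ((huniq s ⟨hs, hu.1, hv.1⟩).trans (huniq s' ⟨hs', hu.2, hv.2⟩).symm)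
  have h2t : (2:ℝ) ≤ (t:ℝ) := by exact_mod_cast ht
  have hδnR : (δ:ℝ) ≤ (P.card:ℝ) := by exact_mod_cast hδn
  have key : specRad G ≤ (P.card : ℝ) + t - 1 - δ := by
    apply Real.sSup_le
    · intro μ hμ
      obtain ⟨x, hx⟩ := hμ.exists_hasEigenvector
      have hxe : (G.adjMatrix ℝ).mulVec x = μ • x := by
        have := hx.apply_eq_smul; rwa [Matrix.toLin'_apply] at this
      have hx0 : x ≠ 0 := hx.right
      set S : ℝ := ∑ v, (x v)^2 with hSdef
      have hSpos : 0 < S := by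
        obtain ⟨v, hv⟩ : ∃ v, x v ≠ 0 := Function.ne_iff.mp hx0
        exact Finset.sum_pos' (fun i _ => sq_nonneg _)
          ⟨v, Finset.mem_univ v, by positivity⟩
      set y : Finset V → ℝ := fun s => ∑ v ∈ s, x v with hydef
      set T : ℝ := ∑ s ∈ P, (y s)^2 with hTdef
      set R : ℝ := (t:ℝ) + (P.card:ℝ) - 1 with hRdef
      -- μ * S = quadratic form
      have hmuS : μ * S = ∑ v, ∑ w, (G.adjMatrix ℝ) v w * (x v * x w) := by
        have h1 : ∑ v, x v * ((G.adjMatrix ℝ).mulVec x v) = μ * S := by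
          rw [hxe, hSdef, Finset.mul_sum]
          exact Finset.sum_congr rfl (fun v _ => by
            simp only [Pi.smul_apply, smul_eq_mul]; ring)
        rw [← h1]
        refine Finset.sum_congr rfl fun v _ => ?_
        rw [Matrix.mulVec, dotProduct, Finset.mul_sum]
        exact Finset.sum_congr rfl fun w _ => by ring
      -- counting cliques through pairs
      have hc : ∀ v w : V, ((P.filter fun s => v ∈ s ∧ w ∈ s).card : ℝ)
          = (G.adjMatrix ℝ) v w + (if v = w then (d v : ℝ) else 0) := by
        intro v w
        by_cases hvw : v = w
        · subst hvw
          simp [SimpleGraph.adjMatrix_apply, hddef]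
        · rw [if_neg hvw, add_zero]
          by_cases hadj : G.Adj v w
          · obtain ⟨s₀, hs₀, huniq⟩ := hP.2 v w hadj
            have hfe : P.filter (fun s => v ∈ s ∧ w ∈ s) = {s₀} := by
              ext s
              simp only [Finset.mem_filter, Finset.mem_singleton]
              constructor
              · rintro ⟨h1, h2, h3⟩; exact huniq s ⟨h1, h2, h3⟩
              · rintro rfl; exact ⟨hs₀.1, hs₀.2.1, hs₀.2.2⟩
            rw [hfe]
            simp [SimpleGraph.adjMatrix_apply, hadj]
          · have hfe : P.filter (fun s => v ∈ s ∧ w ∈ s) = ∅ := by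
              rw [Finset.filter_eq_empty_iff]
              rintro s hs ⟨hv, hw⟩
              exact hadj ((hP.1 s hs) (Finset.mem_coe.mpr hv) (Finset.mem_coe.mpr hw) hvw)
            rw [hfe]
            simp [SimpleGraph.adjMatrix_apply, hadj]
      -- T as a double sum over vertices
      have hI1 : T = ∑ v, ∑ w, ((P.filter fun s => v ∈ s ∧ w ∈ s).card : ℝ) * (x v * x w) := by
        calc T = ∑ s ∈ P, (∑ v, if v ∈ s then x v else 0) * (∑ w, if w ∈ s then x w else 0) := by
              refine Finset.sum_congr rfl fun s _ => ?_
              rw [hydef, sq, Finset.sum_ite_mem, Finset.univ_inter]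
          _ = ∑ s ∈ P, ∑ v, ∑ w, (if v ∈ s ∧ w ∈ s then x v * x w else 0) := by
              refine Finset.sum_congr rfl fun s _ => ?_
              rw [Finset.sum_mul_sum]
              refine Finset.sum_congr rfl fun v _ => Finset.sum_congr rfl fun w _ => ?_
              by_cases h1 : v ∈ s <;> by_cases h2 : w ∈ s <;> simp [h1, h2]
          _ = ∑ v, ∑ w, ∑ s ∈ P, (if v ∈ s ∧ w ∈ s then x v * x w else 0) := by
              rw [Finset.sum_comm]
              exact Finset.sum_congr rfl fun v _ => Finset.sum_comm
          _ = ∑ v, ∑ w, ((P.filter fun s => v ∈ s ∧ w ∈ s).card : ℝ) * (x v * x w) := by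
              refine Finset.sum_congr rfl fun v _ => Finset.sum_congr rfl fun w _ => ?_
              rw [Finset.sum_ite, Finset.sum_const, Finset.sum_const_zero, add_zero,
                nsmul_eq_mul]
      have hdiag : ∀ v : V, ∑ w, (if v = w then (d v:ℝ) else 0) * (x v * x w)
          = (d v : ℝ) * (x v)^2 := by
        intro v
        simp only [ite_mul, zero_mul, Finset.sum_ite_eq, Finset.mem_univ, if_true]
        ring
      have hTsplit : T = (∑ v, ∑ w, (G.adjMatrix ℝ) v w * (x v * x w))
          + ∑ v, (d v:ℝ) * (x v)^2 := by
        rw [hI1, ← Finset.sum_add_distrib]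
        refine Finset.sum_congr rfl fun v _ => ?_
        rw [← hdiag v, ← Finset.sum_add_distrib]
        refine Finset.sum_congr rfl fun w _ => ?_
        rw [hc v w, add_mul]
      have hdS : (δ:ℝ) * S ≤ ∑ v, (d v:ℝ) * (x v)^2 := by
        rw [hSdef, Finset.mul_sum]
        refine Finset.sum_le_sum fun v _ => ?_
        have hdv : (δ:ℝ) ≤ (d v:ℝ) := by exact_mod_cast hδle v
        exact mul_le_mul_of_nonneg_right hdv (sq_nonneg _)
      -- the Gram bound : T ≤ R * S
      set z : V → ℝ := fun v => ∑ s ∈ P, (if v ∈ s then y s else 0) with hzdef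
      have hA : ∑ v, x v * z v = T := by
        calc ∑ v, x v * z v
            = ∑ v, ∑ s ∈ P, (if v ∈ s then x v * y s else 0) := by
              refine Finset.sum_congr rfl fun v _ => ?_
              rw [hzdef, Finset.mul_sum]
              exact Finset.sum_congr rfl fun s _ => by
                by_cases h : v ∈ s <;> simp [h]
          _ = ∑ s ∈ P, ∑ v, (if v ∈ s then x v * y s else 0) := Finset.sum_comm
          _ = ∑ s ∈ P, (∑ v ∈ s, x v) * y s := by
              refine Finset.sum_congr rfl fun s _ => ?_
              rw [Finset.sum_ite_mem, Finset.univ_inter, Finset.sum_mul]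
          _ = T := by
              refine Finset.sum_congr rfl fun s _ => ?_
              simp only [hydef]
              ring
      have hB : T^2 ≤ S * ∑ v, (z v)^2 := by
        rw [← hA, hSdef]
        exact Finset.sum_mul_sq_le_sq_mul_sq _ _ _
      have hC : ∑ v, (z v)^2 = ∑ s ∈ P, ∑ s' ∈ P, ((s ∩ s').card : ℝ) * (y s * y s') := by
        calc ∑ v, (z v)^2
            = ∑ v, ∑ s ∈ P, ∑ s' ∈ P, (if v ∈ s ∧ v ∈ s' then y s * y s' else 0) := by
              refine Finset.sum_congr rfl fun v _ => ?_
              rw [hzdef, sq, Finset.sum_mul_sum]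
              refine Finset.sum_congr rfl fun s _ => Finset.sum_congr rfl fun s' _ => ?_
              by_cases h1 : v ∈ s <;> by_cases h2 : v ∈ s' <;> simp [h1, h2]
          _ = ∑ s ∈ P, ∑ s' ∈ P, ∑ v, (if v ∈ s ∧ v ∈ s' then y s * y s' else 0) := by
              rw [Finset.sum_comm]
              exact Finset.sum_congr rfl fun s _ => Finset.sum_comm
          _ = ∑ s ∈ P, ∑ s' ∈ P, ((s ∩ s').card : ℝ) * (y s * y s') := by
              refine Finset.sum_congr rfl fun s _ => Finset.sum_congr rfl fun s' _ => ?_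
              rw [Finset.sum_ite, Finset.sum_const, Finset.sum_const_zero, add_zero,
                nsmul_eq_mul]
              have hfe : Finset.univ.filter (fun v => v ∈ s ∧ v ∈ s') = s ∩ s' := by
                ext v; simp [Finset.mem_inter]
              rw [hfe]
      have hrow : ∀ s ∈ P, ∑ s' ∈ P, ((s ∩ s').card:ℝ) ≤ R := by
        intro s hs
        rw [← Finset.add_sum_erase P _ hs]
        have h1 : ((s ∩ s).card : ℝ) ≤ (t:ℝ) := by
          rw [Finset.inter_self]; exact_mod_cast hsize s hs
        have h2 : ∑ s' ∈ P.erase s, ((s ∩ s').card:ℝ) ≤ ((P.erase s).card : ℝ) := by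
          calc ∑ s' ∈ P.erase s, ((s ∩ s').card:ℝ) ≤ ∑ _s' ∈ P.erase s, (1:ℝ) :=
                Finset.sum_le_sum fun s' hs' => by
                  exact_mod_cast hint s hs s' (Finset.mem_of_mem_erase hs')
                    (Ne.symm (Finset.ne_of_mem_erase hs'))
            _ = ((P.erase s).card : ℝ) := by simp
        have h3 : ((P.erase s).card : ℝ) = (P.card:ℝ) - 1 := by
          rw [Finset.card_erase_of_mem hs]
          have hc1 : 1 ≤ P.card := Finset.card_pos.mpr ⟨s, hs⟩
          push_cast [hc1]
          ring
        rw [hRdef]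
        linarith
      have hD : ∑ s ∈ P, ∑ s' ∈ P, ((s ∩ s').card:ℝ) * (y s * y s') ≤ R * T := by
        have step1 : ∑ s ∈ P, ∑ s' ∈ P, ((s ∩ s').card:ℝ) * (y s * y s')
            ≤ ∑ s ∈ P, ∑ s' ∈ P, ((s ∩ s').card:ℝ) * ((y s)^2 + (y s')^2) / 2 := by
          refine Finset.sum_le_sum fun s _ => Finset.sum_le_sum fun s' _ => ?_
          have hm : (0:ℝ) ≤ ((s ∩ s').card:ℝ) := Nat.cast_nonneg _
          nlinarith [sq_nonneg (y s - y s'), sq_nonneg (y s + y s')]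
        have step2 : ∑ s ∈ P, ∑ s' ∈ P, ((s ∩ s').card:ℝ) * ((y s)^2 + (y s')^2) / 2
            = ∑ s ∈ P, (∑ s' ∈ P, ((s ∩ s').card:ℝ)) * (y s)^2 := by
          have hsplit : ∀ s ∈ P, ∀ s' ∈ P,
              ((s ∩ s').card:ℝ) * ((y s)^2 + (y s')^2) / 2
              = ((s ∩ s').card:ℝ) * (y s)^2 / 2 + ((s ∩ s').card:ℝ) * (y s')^2 / 2 :=
            fun s _ s' _ => by ring
          calc ∑ s ∈ P, ∑ s' ∈ P, ((s ∩ s').card:ℝ) * ((y s)^2 + (y s')^2) / 2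
              = (∑ s ∈ P, ∑ s' ∈ P, ((s ∩ s').card:ℝ) * (y s)^2 / 2)
                + ∑ s ∈ P, ∑ s' ∈ P, ((s ∩ s').card:ℝ) * (y s')^2 / 2 := by
                rw [← Finset.sum_add_distrib]
                refine Finset.sum_congr rfl fun s hs => ?_
                rw [← Finset.sum_add_distrib]
                exact Finset.sum_congr rfl fun s' hs' => hsplit s hs s' hs'
            _ = (∑ s ∈ P, ∑ s' ∈ P, ((s ∩ s').card:ℝ) * (y s)^2 / 2)
                + ∑ s ∈ P, ∑ s' ∈ P, ((s ∩ s').card:ℝ) * (y s)^2 / 2 := by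
                congr 1
                rw [Finset.sum_comm]
                refine Finset.sum_congr rfl fun s _ => Finset.sum_congr rfl fun s' _ => ?_
                rw [Finset.inter_comm]
            _ = ∑ s ∈ P, (∑ s' ∈ P, ((s ∩ s').card:ℝ)) * (y s)^2 := by
                rw [← Finset.sum_add_distrib]
                refine Finset.sum_congr rfl fun s _ => ?_
                rw [Finset.sum_mul, ← Finset.sum_add_distrib]
                exact Finset.sum_congr rfl fun s' _ => by ring
        have step3 : ∑ s ∈ P, (∑ s' ∈ P, ((s ∩ s').card:ℝ)) * (y s)^2 ≤ R * T := by
          rw [hTdef, Finset.mul_sum]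
          exact Finset.sum_le_sum fun s hs =>
            mul_le_mul_of_nonneg_right (hrow s hs) (sq_nonneg _)
        linarith
      have hT0 : (0:ℝ) ≤ T := Finset.sum_nonneg fun s _ => sq_nonneg _
      have hR1 : (1:ℝ) ≤ R := by
        rw [hRdef]
        have : (0:ℝ) ≤ (P.card:ℝ) := Nat.cast_nonneg _
        linarith
      have hTRS : T ≤ R * S := by
        have hTT : T^2 ≤ S * (R * T) := by
          calc T^2 ≤ S * ∑ v, (z v)^2 := hB
            _ = S * ∑ s ∈ P, ∑ s' ∈ P, ((s ∩ s').card : ℝ) * (y s * y s') := by rw [hC]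
            _ ≤ S * (R * T) := by
                exact mul_le_mul_of_nonneg_left hD (le_of_lt hSpos)
        rcases eq_or_lt_of_le hT0 with h | h
        · rw [← h]; positivity
        · nlinarith
      -- put it together
      have hμRδ : μ * S ≤ (R - δ) * S := by
        have : μ * S = T - ∑ v, (d v:ℝ) * (x v)^2 := by
          rw [hmuS]; linarith [hTsplit]
        rw [this]
        have : (R - (δ:ℝ)) * S = R * S - (δ:ℝ) * S := by ring
        rw [this]
        linarith
      have := le_of_mul_le_mul_right hμRδ hSpos
      rw [hRdef] at this
      linarith
    · linarith
  linarith
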